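/- Let X be a proper geodesic metric space, and let A and B be nonempty closed subsets of X with d = d_H(A, B) < ∞. For each t ∈ [0, d] set C_t = B_t(A) ∩ B_{d−t}(B). Then for all 0 ≤ t ≤ s ≤ d one has d_H(C_t, C_s) ≤ s − t. -/

import Mathlib

open scoped ENNReal

noncomputable section

/-- Ultrametric pseudodistance: infimum over chains from `x` to `y` of the
maximal edge length of the chain. -/
noncomputable def ultraDist {X : Type*} [MetricSpace X] (x y : X) : ℝ≥0∞ :=
  ⨅ (n : ℕ) (f : Fin (n + 1) → X) (_ : f 0 = x) (_ : f (Fin.last n) = y),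
    ⨆ i : Fin n, edist (f i.castSucc) (f i.succ)

/-- Ultrametric pseudodiameter. -/
noncomputable def ultraDiam (X : Type*) [MetricSpace X] : ℝ≥0∞ :=
  ⨆ (x : X) (y : X), ultraDist x y

/-- A correspondence between `X` and `Y`: a relation whose projections are surjective. -/
def IsCorrespondence {X Y : Type*} (R : Set (X × Y)) : Prop :=
  (∀ x : X, ∃ y : Y, (x, y) ∈ R) ∧ (∀ y : Y, ∃ x : X, (x, y) ∈ R)

/-- Distortion of a relation. -/
noncomputable def distortion {X Y : Type*} [MetricSpace X] [MetricSpace Y]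
    (R : Set (X × Y)) : ℝ≥0∞ :=
  ⨆ (p ∈ R) (q ∈ R), ENNReal.ofReal |dist p.1 q.1 - dist p.2 q.2|

/-- Gromov–Hausdorff distance: half the infimal distortion of correspondences. -/
noncomputable def ghDist (X Y : Type*) [MetricSpace X] [MetricSpace Y] : ℝ≥0∞ :=
  (⨅ (R : Set (X × Y)) (_ : IsCorrespondence R), distortion R) / 2


/-- A metric space is geodesic if every two points are joined by an isometric
(shortest) path parameterized by `[0, dist x y]`. -/
def IsGeodesicSpace (X : Type*) [MetricSpace X] : Prop :=
  ∀ x y : X, ∃ γ : ℝ → X, γ 0 = x ∧ γ (dist x y) = y ∧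
    ∀ s t : ℝ, s ∈ Set.Icc (0 : ℝ) (dist x y) → t ∈ Set.Icc (0 : ℝ) (dist x y) →
      dist (γ s) (γ t) = |s - t|


/-- In a proper geodesic space one can move a point a distance `δ` closer to a
closed nonempty set. -/
lemma ultra_aux_step {X : Type*} [MetricSpace X] [ProperSpace X]
    (hgeo : IsGeodesicSpace X) (S : Set X) (hS : S.Nonempty) (hSc : IsClosed S)
    (x : X) (δ r : ℝ) (hδ : 0 ≤ δ) (hr : Metric.infDist x S ≤ r) :
    ∃ y : X, dist x y ≤ δ ∧ Metric.infDist y S ≤ max (r - δ) 0 := by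
  obtain ⟨b, hbS, hb⟩ := hSc.exists_infDist_eq_dist hS x
  by_cases h : dist x b ≤ δ
  · refine ⟨b, h, ?_⟩
    rw [Metric.infDist_zero_of_mem hbS]
    exact le_max_right _ _
  · push_neg at h
    obtain ⟨γ, hγ0, hγd, hγ⟩ := hgeo x b
    refine ⟨γ δ, ?_, ?_⟩
    · have := hγ 0 δ ⟨le_refl 0, dist_nonneg⟩ ⟨hδ, h.le⟩
      rw [hγ0] at this
      rw [this, abs_of_nonpos (by linarith : (0:ℝ) - δ ≤ 0), neg_sub, sub_zero]
    · have hdb : dist (γ δ) b = dist x b - δ := by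
        have := hγ δ (dist x b) ⟨hδ, h.le⟩ ⟨dist_nonneg, le_refl _⟩
        rw [hγd] at this
        rw [this, abs_of_nonpos (by linarith)]
        ring
      have h1 : Metric.infDist (γ δ) S ≤ dist x b - δ := by
        rw [← hdb]; exact Metric.infDist_le_dist_of_mem hbS
      have h2 : dist x b - δ ≤ r - δ := by rw [← hb]; linarith
      exact le_max_of_le_left (h1.trans h2)

lemma ultra_aux_mem_cth {X : Type*} [MetricSpace X] (S : Set X) (hS : S.Nonempty)
    (x : X) (δ : ℝ) (hδ : 0 ≤ δ) :
    x ∈ Metric.cthickening δ S ↔ Metric.infDist x S ≤ δ := by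
  rw [Metric.mem_cthickening_iff, Metric.infDist]
  have hne : EMetric.infEdist x S ≠ ⊤ := by
    exact Metric.infEDist_ne_top hS
  exact ENNReal.le_ofReal_iff_toReal_le hne hδ

/-- in a proper geodesic space, for closed nonempty `A`, `B` at
finite Hausdorff distance `d` and `C_t = B_t(A) ∩ B_{d−t}(B)`, one has
`d_H(C_t, C_s) ≤ s − t` for all `0 ≤ t ≤ s ≤ d`. -/
theorem canonical_interpolation_hausdorff_le {X : Type*} [MetricSpace X] [ProperSpace X]
    (hgeo : IsGeodesicSpace X) (A B : Set X) (hA : A.Nonempty) (hB : B.Nonempty)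
    (hAc : IsClosed A) (hBc : IsClosed B)
    (hfin : EMetric.hausdorffEdist A B ≠ ⊤)
    (d : ℝ) (hd : d = (EMetric.hausdorffEdist A B).toReal)
    (t s : ℝ) (h0 : 0 ≤ t) (hts : t ≤ s) (hsd : s ≤ d) :
    EMetric.hausdorffEdist
        (Metric.cthickening t A ∩ Metric.cthickening (d - t) B)
        (Metric.cthickening s A ∩ Metric.cthickening (d - s) B)
      ≤ ENNReal.ofReal (s - t) := by
  have hd0 : 0 ≤ d := hd ▸ ENNReal.toReal_nonneg
  have hs0 : 0 ≤ s := h0.trans hts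
  have hst : 0 ≤ s - t := by linarith
  have hdt : 0 ≤ d - t := by linarith
  have hds : 0 ≤ d - s := by linarith
  apply EMetric.hausdorffEdist_le_of_mem_edist
  · rintro x ⟨hxA, hxB⟩
    rw [ultra_aux_mem_cth A hA x t h0] at hxA
    rw [ultra_aux_mem_cth B hB x (d - t) hdt] at hxB
    obtain ⟨y, hxy, hyB⟩ := ultra_aux_step hgeo B hB hBc x (s - t) (d - t) hst hxB
    refine ⟨y, ⟨?_, ?_⟩, ?_⟩
    · rw [ultra_aux_mem_cth A hA y s hs0]
      calc Metric.infDist y A ≤ Metric.infDist x A + dist y x :=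
            Metric.infDist_le_infDist_add_dist
        _ ≤ t + (s - t) := by rw [dist_comm]; exact add_le_add hxA hxy
        _ = s := by ring
    · rw [ultra_aux_mem_cth B hB y (d - s) hds]
      calc Metric.infDist y B ≤ max (d - t - (s - t)) 0 := hyB
        _ = d - s := by rw [max_eq_left (by linarith)]; ring
    · rw [edist_dist]; exact ENNReal.ofReal_le_ofReal hxy
  · rintro y ⟨hyA, hyB⟩
    rw [ultra_aux_mem_cth A hA y s hs0] at hyA
    rw [ultra_aux_mem_cth B hB y (d - s) hds] at hyB
    obtain ⟨x, hyx, hxA⟩ := ultra_aux_step hgeo A hA hAc y (s - t) s hst hyA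
    refine ⟨x, ⟨?_, ?_⟩, ?_⟩
    · rw [ultra_aux_mem_cth A hA x t h0]
      calc Metric.infDist x A ≤ max (s - (s - t)) 0 := hxA
        _ = t := by rw [max_eq_left (by linarith)]; ring
    · rw [ultra_aux_mem_cth B hB x (d - t) hdt]
      calc Metric.infDist x B ≤ Metric.infDist y B + dist x y :=
            Metric.infDist_le_infDist_add_dist
        _ ≤ (d - s) + (s - t) := by rw [dist_comm]; exact add_le_add hyB hyx
        _ = d - t := by ring
    · rw [edist_dist]; exact ENNReal.ofReal_le_ofReal hyx


end
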